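/- Suppose π* ≥ 1 satisfies Φ(π*) ≤ c. Then for every d ∈ D, the output vector δ(π*,d) of pCR-PRM(π*) is a feasible discharging vector for d and σ(d) ≤ π* · R(d, δ(π*,d)); that is, pCR-PRM(π*) is π*-competitive for the online peak-demand reduction maximization problem. -/
import Mathlib


open Finset MeasureTheory

noncomputable section

/-- A discharging vector `δ` is feasible for demand profile `d` (with capacity `c`
and per-slot limit `dmax`). -/
def Feasible {T : ℕ} (c dmax : ℝ) (d δ : Fin T → ℝ) : Prop :=
  (∑ t, δ t) ≤ c ∧ ∀ t, 0 ≤ δ t ∧ δ t ≤ min dmax (d t)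

/-- Peak-demand reduction `R(d, δ)`. -/
noncomputable def Red {T : ℕ} (d δ : Fin T → ℝ) : ℝ :=
  (⨆ t, d t) - ⨆ t, (d t - δ t)

/-- Offline optimal peak-demand reduction `σ(d)`. -/
noncomputable def offOpt {T : ℕ} (c dmax : ℝ) (d : Fin T → ℝ) : ℝ :=
  sSup {r | ∃ δ : Fin T → ℝ, Feasible c dmax d δ ∧ r = Red d δ}

/-- Prefix maximum `max_{k ∈ [t]} d_k`. -/
noncomputable def prefMax {T : ℕ} (d : Fin T → ℝ) (t : Fin T) : ℝ :=
  ⨆ k : {k : Fin T // k ≤ t}, d k.1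

/-- The uncertainty set `D`: all profiles with entries in `[dlo, dhi]`. -/
def inD {T : ℕ} (dlo dhi : ℝ) (d : Fin T → ℝ) : Prop :=
  ∀ t, dlo ≤ d t ∧ d t ≤ dhi

/-- Reference profile `d^t`: observed demands up to slot `t`, lowest demand `dlo` afterwards. -/
def ref {T : ℕ} (dlo : ℝ) (d : Fin T → ℝ) (t : Fin T) : Fin T → ℝ :=
  fun k => if k ≤ t then d k else dlo

/-- Output of `pCR-PRM(π)` at slot `t`:
`δ_t(π, d) = [d_t − max_{k∈[t]} d_k + σ(d^t)/π]⁺`. -/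
noncomputable def pcr {T : ℕ} (c dmax dlo : ℝ) (π : ℝ) (d : Fin T → ℝ) (t : Fin T) : ℝ :=
  max (d t - prefMax d t + offOpt c dmax (ref dlo d t) / π) 0

/-- Inventory function `Φ(π) = sup_{d ∈ D} ∑_t δ_t(π, d)`. -/
noncomputable def Phi (T : ℕ) (c dmax dlo dhi : ℝ) (π : ℝ) : ℝ :=
  sSup {s | ∃ d : Fin T → ℝ, inD dlo dhi d ∧ s = ∑ t, pcr c dmax dlo π d t}

lemma fin_bdd {α : Type*} [Finite α] (f : α → ℝ) : BddAbove (Set.range f) :=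
  (Set.finite_range f).bddAbove

lemma exists_isup {T : ℕ} (hT : 0 < T) (f : Fin T → ℝ) :
    ∃ t, (⨆ s, f s) = f t ∧ ∀ s, f s ≤ f t := by
  haveI : Nonempty (Fin T) := Fin.pos_iff_nonempty.mp hT
  obtain ⟨t, ht⟩ := Finite.exists_max f
  exact ⟨t, le_antisymm (ciSup_le ht) (le_ciSup (fin_bdd f) t), ht⟩

lemma red_le {T : ℕ} (hT : 0 < T) (c dmax : ℝ) (d δ : Fin T → ℝ)
    (h : Feasible c dmax d δ) : Red d δ ≤ min dmax (⨆ t, d t) := by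
  obtain ⟨t, ht, hmax⟩ := exists_isup hT d
  have h1 : d t - δ t ≤ ⨆ s, (d s - δ s) := le_ciSup (fin_bdd fun s => d s - δ s) t
  have h2 := (h.2 t).2
  unfold Red
  calc (⨆ s, d s) - ⨆ s, (d s - δ s) ≤ d t - (d t - δ t) := by rw [ht]; linarith
    _ = δ t := by ring
    _ ≤ min dmax (d t) := h2
    _ = min dmax (⨆ s, d s) := by rw [ht]

lemma zero_mem_off {T : ℕ} (hT : 0 < T) (c dmax : ℝ) (hc : 0 ≤ c) (hdmax : 0 ≤ dmax)
    (d : Fin T → ℝ) (hd : ∀ t, 0 ≤ d t) :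
    (0:ℝ) ∈ {r | ∃ δ : Fin T → ℝ, Feasible c dmax d δ ∧ r = Red d δ} := by
  haveI : Nonempty (Fin T) := Fin.pos_iff_nonempty.mp hT
  refine ⟨0, ⟨by simpa using hc, fun t => ⟨le_refl 0, le_min hdmax (hd t)⟩⟩, ?_⟩
  unfold Red; simp

lemma off_bdd {T : ℕ} (hT : 0 < T) (c dmax : ℝ) (d : Fin T → ℝ) :
    BddAbove {r | ∃ δ : Fin T → ℝ, Feasible c dmax d δ ∧ r = Red d δ} := by
  refine ⟨min dmax (⨆ t, d t), fun r hr => ?_⟩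
  obtain ⟨δ, hδ, rfl⟩ := hr
  exact red_le hT c dmax d δ hδ

lemma offOpt_nonneg {T : ℕ} (hT : 0 < T) (c dmax : ℝ) (hc : 0 ≤ c) (hdmax : 0 ≤ dmax)
    (d : Fin T → ℝ) (hd : ∀ t, 0 ≤ d t) : 0 ≤ offOpt c dmax d :=
  le_csSup (off_bdd hT c dmax d) (zero_mem_off hT c dmax hc hdmax d hd)

lemma offOpt_le {T : ℕ} (hT : 0 < T) (c dmax : ℝ) (hc : 0 ≤ c) (hdmax : 0 ≤ dmax)
    (d : Fin T → ℝ) (hd : ∀ t, 0 ≤ d t) : offOpt c dmax d ≤ min dmax (⨆ t, d t) :=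
  csSup_le ⟨0, zero_mem_off hT c dmax hc hdmax d hd⟩
    (by rintro r ⟨δ, hδ, rfl⟩; exact red_le hT c dmax d δ hδ)

lemma offOpt_mono {T : ℕ} (hT : 0 < T) (c dmax : ℝ) (hc : 0 ≤ c) (hdmax : 0 ≤ dmax)
    (d d' : Fin T → ℝ) (hd : ∀ t, 0 ≤ d t) (hd' : ∀ t, 0 ≤ d' t) (hle : ∀ t, d' t ≤ d t) :
    offOpt c dmax d ≤ offOpt c dmax d' + ((⨆ t, d t) - ⨆ t, d' t) := by
  haveI : Nonempty (Fin T) := Fin.pos_iff_nonempty.mp hT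
  apply csSup_le ⟨0, zero_mem_off hT c dmax hc hdmax d hd⟩
  rintro r ⟨δ, hδ, rfl⟩
  set δ' : Fin T → ℝ := fun k => min (δ k) (d' k) with hδ'def
  have hfeas' : Feasible c dmax d' δ' := by
    refine ⟨le_trans (Finset.sum_le_sum fun k _ => min_le_left _ _) hδ.1, fun t => ?_⟩
    exact ⟨le_min (hδ.2 t).1 (hd' t),
      le_min (le_trans (min_le_left _ _) (le_trans (hδ.2 t).2 (min_le_left _ _)))
        (min_le_right _ _)⟩
  have hsupd : 0 ≤ ⨆ t, (d t - δ t) := by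
    obtain ⟨t0⟩ := (inferInstance : Nonempty (Fin T))
    have h0 : 0 ≤ d t0 - δ t0 :=
      sub_nonneg.2 (le_trans (hδ.2 t0).2 (min_le_right _ _))
    exact le_trans h0 (le_ciSup (fin_bdd fun s => d s - δ s) t0)
  have hkey : ∀ t, d' t - δ' t ≤ ⨆ s, (d s - δ s) := by
    intro t
    have h1 : d' t - δ' t = max (d' t - δ t) (0:ℝ) := by
      simp only [hδ'def]
      rcases le_total (δ t) (d' t) with h | h
      · rw [min_eq_left h, max_eq_left (by linarith)]
      · rw [min_eq_right h, sub_self, max_eq_right (by linarith)]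
    rw [h1]
    apply max_le _ hsupd
    exact le_trans (by linarith [hle t]) (le_ciSup (fin_bdd fun s => d s - δ s) t)
  have h2 : (⨆ t, (d' t - δ' t)) ≤ ⨆ t, (d t - δ t) := ciSup_le hkey
  have h3 : Red d' δ' ≤ offOpt c dmax d' :=
    le_csSup (off_bdd hT c dmax d') ⟨δ', hfeas', rfl⟩
  unfold Red at h3 ⊢
  linarith

lemma le_prefMax {T : ℕ} (d : Fin T → ℝ) {k t : Fin T} (h : k ≤ t) : d k ≤ prefMax d t :=
  le_ciSup (fin_bdd fun k : {k : Fin T // k ≤ t} => d k.1) (⟨k, h⟩ : {k : Fin T // k ≤ t})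

lemma prefMax_le {T : ℕ} (d : Fin T → ℝ) (t : Fin T) (x : ℝ) (h : ∀ k, k ≤ t → d k ≤ x) :
    prefMax d t ≤ x := by
  haveI : Nonempty {k : Fin T // k ≤ t} := ⟨⟨t, le_refl t⟩⟩
  exact ciSup_le fun k => h k.1 k.2

lemma sup_ref {T : ℕ} (hT : 0 < T) (dlo : ℝ) (d : Fin T → ℝ) (t : Fin T)
    (hd : ∀ k, dlo ≤ d k) : (⨆ k, ref dlo d t k) = prefMax d t := by
  haveI : Nonempty (Fin T) := Fin.pos_iff_nonempty.mp hT
  apply le_antisymm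
  · apply ciSup_le; intro k
    unfold ref
    by_cases h : k ≤ t
    · simpa [h] using le_prefMax d h
    · simpa [h] using le_trans (hd t) (le_prefMax d (le_refl t))
  · apply prefMax_le; intro k hk
    have h1 : d k = ref dlo d t k := by simp [ref, hk]
    rw [h1]; exact le_ciSup (fin_bdd (ref dlo d t)) k

lemma ref_pos {T : ℕ} {dlo : ℝ} (hdlo : 0 ≤ dlo) {d : Fin T → ℝ} (hd : ∀ k, dlo ≤ d k)
    (t : Fin T) : ∀ k, 0 ≤ ref dlo d t k := by
  intro k; unfold ref; split
  · exact le_trans hdlo (hd k)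
  · exact hdlo

lemma ref_le {T : ℕ} {dlo : ℝ} {d : Fin T → ℝ} (hd : ∀ k, dlo ≤ d k)
    (t : Fin T) : ∀ k, ref dlo d t k ≤ d k := by
  intro k; unfold ref; split
  · exact le_refl _
  · exact hd k

lemma pcr_le {T : ℕ} (hT : 0 < T) (c dmax dlo : ℝ) (hc : 0 ≤ c) (hdmax : 0 < dmax)
    (hdlo : 0 < dlo) (π : ℝ) (hπ : 1 ≤ π) (d : Fin T → ℝ) (hd : ∀ k, dlo ≤ d k) (t : Fin T) :
    pcr c dmax dlo π d t ≤ min dmax (d t) := by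
  have hσ0 : 0 ≤ offOpt c dmax (ref dlo d t) :=
    offOpt_nonneg hT c dmax hc hdmax.le _ (ref_pos hdlo.le hd t)
  have hσle : offOpt c dmax (ref dlo d t) ≤ min dmax (prefMax d t) := by
    have h := offOpt_le hT c dmax hc hdmax.le (ref dlo d t) (ref_pos hdlo.le hd t)
    rwa [sup_ref hT dlo d t hd] at h
  have hσ1 : offOpt c dmax (ref dlo d t) ≤ dmax := hσle.trans (min_le_left _ _)
  have hσ2 : offOpt c dmax (ref dlo d t) ≤ prefMax d t := hσle.trans (min_le_right _ _)
  have hdiv : offOpt c dmax (ref dlo d t) / π ≤ offOpt c dmax (ref dlo d t) :=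
    div_le_self hσ0 hπ
  have hdiv0 : 0 ≤ offOpt c dmax (ref dlo d t) / π :=
    div_nonneg hσ0 (by linarith)
  have hpm : d t ≤ prefMax d t := le_prefMax d (le_refl t)
  unfold pcr
  apply max_le
  · apply le_min <;> linarith
  · apply le_min <;> linarith [hdlo.le.trans (hd t)]

/-- if `Φ(π*) ≤ c`, then `pCR-PRM(π*)` is feasible and `π*`-competitive:
`σ(d) ≤ π* · R(d, δ(π*, d))` for all `d ∈ D`. -/
theorem stmt12 (T : ℕ) (hT : 0 < T) (c dmax dlo dhi : ℝ)
    (hc : 0 < c) (hdmax : 0 < dmax) (hdlo : 0 < dlo) (hbd : dlo ≤ dhi)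
    (π : ℝ) (hπ : 1 ≤ π) (hΦ : Phi T c dmax dlo dhi π ≤ c) :
    ∀ d : Fin T → ℝ, inD dlo dhi d →
      Feasible c dmax d (pcr c dmax dlo π d) ∧
        offOpt c dmax d ≤ π * Red d (pcr c dmax dlo π d) := by
  haveI : Nonempty (Fin T) := Fin.pos_iff_nonempty.mp hT
  intro d hd
  have hd' : ∀ k, dlo ≤ d k := fun k => (hd k).1
  have hπ0 : (0:ℝ) < π := lt_of_lt_of_le one_pos hπ
  have hbound := pcr_le hT c dmax dlo hc.le hdmax hdlo π hπ d hd'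
  have hnn : ∀ t, 0 ≤ pcr c dmax dlo π d t := fun t => le_max_right _ _
  have hsum : (∑ t, pcr c dmax dlo π d t) ≤ c := by
    have h : (∑ t, pcr c dmax dlo π d t) ≤ Phi T c dmax dlo dhi π := by
      unfold Phi
      apply le_csSup
      · refine ⟨T * dmax, ?_⟩
        rintro s ⟨d2, hd2, rfl⟩
        calc ∑ t, pcr c dmax dlo π d2 t ≤ ∑ _t : Fin T, dmax :=
              Finset.sum_le_sum fun t _ =>
                (pcr_le hT c dmax dlo hc.le hdmax hdlo π hπ d2 (fun k => (hd2 k).1) t).trans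
                  (min_le_left _ _)
          _ = T * dmax := by simp [Finset.sum_const, Finset.card_univ, nsmul_eq_mul]
      · exact ⟨d, hd, rfl⟩
    exact h.trans hΦ
  set σd := offOpt c dmax d with hσd
  have key : ∀ t, d t - pcr c dmax dlo π d t ≤ (⨆ s, d s) - σd / π := by
    intro t
    have h1 : d t - prefMax d t + offOpt c dmax (ref dlo d t) / π ≤
        pcr c dmax dlo π d t := le_max_left _ _
    have hmono : σd ≤ offOpt c dmax (ref dlo d t) + ((⨆ s, d s) - ⨆ s, ref dlo d t s) :=
      offOpt_mono hT c dmax hc.le hdmax.le d (ref dlo d t)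
        (fun k => hdlo.le.trans (hd' k)) (ref_pos hdlo.le hd' t) (ref_le hd' t)
    rw [sup_ref hT dlo d t hd'] at hmono
    have hpmle : prefMax d t ≤ ⨆ s, d s :=
      prefMax_le d t _ (fun k _ => le_ciSup (fin_bdd d) k)
    have hΔ : 0 ≤ (⨆ s, d s) - prefMax d t := by linarith
    have h2 : σd ≤ offOpt c dmax (ref dlo d t) + ((⨆ s, d s) - prefMax d t) * π := by
      nlinarith
    have h3 : σd / π ≤ offOpt c dmax (ref dlo d t) / π + ((⨆ s, d s) - prefMax d t) := by
      rw [div_le_iff₀ hπ0]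
      calc σd ≤ offOpt c dmax (ref dlo d t) + ((⨆ s, d s) - prefMax d t) * π := h2
        _ = (offOpt c dmax (ref dlo d t) / π + ((⨆ s, d s) - prefMax d t)) * π := by
            field_simp
    linarith
  have hsup2 : (⨆ t, (d t - pcr c dmax dlo π d t)) ≤ (⨆ s, d s) - σd / π := ciSup_le key
  have hRed : σd / π ≤ Red d (pcr c dmax dlo π d) := by
    unfold Red; linarith
  refine ⟨⟨hsum, fun t => ⟨hnn t, hbound t⟩⟩, ?_⟩
  calc σd = π * (σd / π) := by field_simp
    _ ≤ π * Red d (pcr c dmax dlo π d) :=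
        mul_le_mul_of_nonneg_left hRed hπ0.le
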